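/- Let k1, k2 ∈ ℝ with 0 < k1 < 2 and k2 > 0, let h1(x) = e^{(k1+k2)x}·(k2(2+k2)x² − 2(1+k2)x + 2) + k1(2−k1)x² + 2(1−k1)x − 2, and let T = (k1+k2)·(6k2(2+k2) − 6(k1+k2)(1+k2) + 2(k1+k2)²). Then: if T > 0, h1 has exactly one root in (−∞,0) and no root in (0,∞); if T < 0, h1 has exactly one root in (0,∞) and no root in (−∞,0); and if T = 0, then h1(x) ≠ 0 for all x ≠ 0. -/

import Mathlib

open Real Set Filter Topology


/-- Basic shape: polynomial plus decaying exponential times polynomial. -/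
noncomputable def sh (a α β γ δ ε ζ : ℝ) : ℝ → ℝ := fun x =>
  α * x ^ 2 + β * x + γ + Real.exp (-(a * x)) * (δ * x ^ 2 + ε * x + ζ)

lemma sh_deriv (a α β γ δ ε ζ x : ℝ) :
    HasDerivAt (sh a α β γ δ ε ζ)
      (sh a 0 (2 * α) β (-(a * δ)) (2 * δ - a * ε) (ε - a * ζ) x) x := by
  have h1 : HasDerivAt (fun x : ℝ => -(a * x)) (-a) x := by
    have h := ((hasDerivAt_id x).const_mul a).neg
    rw [mul_one] at h
    exact h
  have h2 : HasDerivAt (fun x : ℝ => Real.exp (-(a * x)))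
      (Real.exp (-(a * x)) * -a) x := h1.exp
  have h3 : HasDerivAt (fun x : ℝ => δ * x ^ 2 + ε * x + ζ) (δ * (2 * x) + ε) x := by
    have h := ((hasDerivAt_pow 2 x).const_mul δ).add ((hasDerivAt_id x).const_mul ε)
    simpa using (h.add_const ζ)
  have h4 : HasDerivAt (fun x : ℝ => α * x ^ 2 + β * x + γ) (α * (2 * x) + β) x := by
    have h := ((hasDerivAt_pow 2 x).const_mul α).add ((hasDerivAt_id x).const_mul β)
    simpa using (h.add_const γ)
  have h5 := h4.add (h2.mul h3)
  have heq : α * (2 * x) + β +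
      (Real.exp (-(a * x)) * -a * (δ * x ^ 2 + ε * x + ζ)
        + Real.exp (-(a * x)) * (δ * (2 * x) + ε))
      = sh a 0 (2 * α) β (-(a * δ)) (2 * δ - a * ε) (ε - a * ζ) x := by
    simp only [sh]; ring
  rw [← heq]
  exact h5


lemma decay (a : ℝ) (ha : 0 < a) (δ ε ζ : ℝ) :
    Tendsto (fun x => Real.exp (-(a * x)) * (δ * x ^ 2 + ε * x + ζ)) atTop (𝓝 0) := by
  have key : ∀ n : ℕ, Tendsto (fun x : ℝ => x ^ n * Real.exp (-(a * x))) atTop (𝓝 0) := by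
    intro n
    have h := (tendsto_pow_mul_exp_neg_atTop_nhds_zero n).comp
      (Tendsto.const_mul_atTop ha tendsto_id)
    have h2 := h.const_mul ((a ^ n)⁻¹)
    rw [mul_zero] at h2
    refine h2.congr fun x => ?_
    have han : (a : ℝ) ^ n ≠ 0 := by positivity
    simp only [Function.comp_apply, id]
    field_simp [mul_pow]
    ring
  have h2 := (key 2).const_mul δ
  have h1 := (key 1).const_mul ε
  have h0 := (key 0).const_mul ζ
  have h := (h2.add h1).add h0
  simp only [mul_zero, add_zero] at h
  refine h.congr fun x => ?_
  simp only [pow_one, pow_zero, one_mul]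
  ring

lemma sh_tendsto_const (a β γ δ ε ζ : ℝ) (ha : 0 < a) (hβ : β = 0) :
    Tendsto (sh a 0 β γ δ ε ζ) atTop (𝓝 γ) := by
  have h := (tendsto_const_nhds (x := γ) (f := atTop)).add (decay a ha δ ε ζ)
  rw [add_zero] at h
  refine h.congr fun x => ?_
  simp [sh, hβ]

lemma sh_tendsto_atTop_lin (a β γ δ ε ζ : ℝ) (ha : 0 < a) (hβ : 0 < β) :
    Tendsto (sh a 0 β γ δ ε ζ) atTop atTop := by
  have h1 : Tendsto (fun x : ℝ => β * x + γ) atTop atTop :=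
    tendsto_atTop_add_const_right _ γ (Tendsto.const_mul_atTop hβ tendsto_id)
  have h2 := h1.atTop_add (decay a ha δ ε ζ)
  refine h2.congr fun x => ?_
  simp only [sh]; ring

lemma sh_tendsto_atTop_quad (a α β γ δ ε ζ : ℝ) (ha : 0 < a) (hα : 0 < α) :
    Tendsto (sh a α β γ δ ε ζ) atTop atTop := by
  have h0 : Tendsto (fun x : ℝ => x * (α * x + β)) atTop atTop :=
    Tendsto.atTop_mul_atTop₀ tendsto_id
      (tendsto_atTop_add_const_right _ β (Tendsto.const_mul_atTop hα tendsto_id))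
  have h1 : Tendsto (fun x : ℝ => x * (α * x + β) + γ) atTop atTop :=
    tendsto_atTop_add_const_right _ γ h0
  have h2 := h1.atTop_add (decay a ha δ ε ζ)
  refine h2.congr fun x => ?_
  simp only [sh]; ring

section helpers
variable {u u' : ℝ → ℝ}

lemma smOn (hu : ∀ x, HasDerivAt u (u' x) x) {D : Set ℝ} (hD : Convex ℝ D)
    (h : ∀ x ∈ interior D, 0 < u' x) : StrictMonoOn u D :=
  strictMonoOn_of_deriv_pos hD (fun x _ => (hu x).continuousAt.continuousWithinAt)
    (fun x hx => by rw [(hu x).deriv]; exact h x hx)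

lemma saOn (hu : ∀ x, HasDerivAt u (u' x) x) {D : Set ℝ} (hD : Convex ℝ D)
    (h : ∀ x ∈ interior D, u' x < 0) : StrictAntiOn u D :=
  strictAntiOn_of_deriv_neg hD (fun x _ => (hu x).continuousAt.continuousWithinAt)
    (fun x hx => by rw [(hu x).deriv]; exact h x hx)

lemma anti_gt_limit {t L : ℝ} (ha : StrictAntiOn u (Ici t))
    (hlim : Tendsto u atTop (𝓝 L)) : ∀ x, t ≤ x → L < u x := by
  intro x hx
  have h1 : L ≤ u (x + 1) := by
    refine le_of_tendsto hlim ?_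
    filter_upwards [eventually_ge_atTop (x + 1)] with z hz
    rcases eq_or_lt_of_le hz with h | h
    · exact le_of_eq (congrArg u h.symm)
    · exact (ha (mem_Ici.2 (by linarith)) (mem_Ici.2 (by linarith)) h).le
  have h2 : u (x + 1) < u x :=
    ha (mem_Ici.2 hx) (mem_Ici.2 (by linarith)) (lt_add_one x)
  linarith

end helpers

lemma quad_pos_mid (A B C d : ℝ) (hA : A < 0) (hd2 : d ^ 2 = B ^ 2 - 4 * A * C)
    {x : ℝ} (h1 : (B - d) / (-(2 * A)) < x) (h2 : x < (B + d) / (-(2 * A))) :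
    0 < A * x ^ 2 + B * x + C := by
  have h2A : 0 < -(2 * A) := by linarith
  have e1 : B - d < x * -(2 * A) := (div_lt_iff₀ h2A).1 h1
  have e2 : x * -(2 * A) < B + d := (lt_div_iff₀ h2A).1 h2
  have f1 : 0 < d - (2 * A * x + B) := by nlinarith
  have f2 : 0 < (2 * A * x + B) + d := by nlinarith
  nlinarith [mul_pos f1 f2, hd2, hA]

lemma quad_neg_left (A B C d : ℝ) (hA : A < 0) (hd0 : 0 ≤ d)
    (hd2 : d ^ 2 = B ^ 2 - 4 * A * C)
    {x : ℝ} (h1 : x < (B - d) / (-(2 * A))) : A * x ^ 2 + B * x + C < 0 := by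
  have h2A : 0 < -(2 * A) := by linarith
  have e1 : x * -(2 * A) < B - d := (lt_div_iff₀ h2A).1 h1
  have f1 : 0 < (2 * A * x + B) - d := by nlinarith
  have f2 : 0 < (2 * A * x + B) + d := by nlinarith
  nlinarith [mul_pos f1 f2, hd2, hA]

lemma quad_neg_right (A B C d : ℝ) (hA : A < 0) (hd0 : 0 ≤ d)
    (hd2 : d ^ 2 = B ^ 2 - 4 * A * C)
    {x : ℝ} (h1 : (B + d) / (-(2 * A)) < x) : A * x ^ 2 + B * x + C < 0 := by
  have h2A : 0 < -(2 * A) := by linarith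
  have e1 : B + d < x * -(2 * A) := (div_lt_iff₀ h2A).1 h1
  have f1 : 0 < -(2 * A * x + B) - d := by nlinarith
  have f2 : 0 < -(2 * A * x + B) + d := by nlinarith
  nlinarith [mul_pos f1 f2, hd2, hA]

lemma Bd_pos (A B C : ℝ) (hA : A < 0) (hC : 0 < C) :
    0 < B + Real.sqrt (B ^ 2 - 4 * A * C) := by
  have hAC : 0 < -A * C := mul_pos (by linarith) hC
  have hd0 := Real.sqrt_nonneg (B ^ 2 - 4 * A * C)
  have hd2 : Real.sqrt (B ^ 2 - 4 * A * C) ^ 2 = B ^ 2 - 4 * A * C :=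
    Real.sq_sqrt (by nlinarith)
  nlinarith [hd0, hd2, hAC]

lemma Bd_pos' (A B C : ℝ) (hB : 0 < B) (hC : C = 0) :
    0 < B + Real.sqrt (B ^ 2 - 4 * A * C) := by
  rw [hC, show B ^ 2 - 4 * A * 0 = B ^ 2 by ring, Real.sqrt_sq hB.le]
  linarith
lemma masterPOS_abs {u u1 u2 u3 e : ℝ → ℝ} (A B C L : ℝ)
    (hA : A < 0) (hC : 0 ≤ C) (hL : 0 < L)
    (hBd : 0 < B + Real.sqrt (B ^ 2 - 4 * A * C))
    (hD0 : ∀ x, HasDerivAt u (u1 x) x)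
    (hD1 : ∀ x, HasDerivAt u1 (u2 x) x)
    (hD2 : ∀ x, HasDerivAt u2 (u3 x) x)
    (he : ∀ x, 0 < e x)
    (hu3eq : ∀ x, u3 x = e x * (A * x ^ 2 + B * x + C))
    (h00 : u 0 = 0) (h10 : u1 0 = 0) (h20 : u2 0 = 0)
    (hlim2 : Tendsto u2 atTop (𝓝 L)) :
    ∀ x, 0 < x → 0 < u x := by
  have hdisc : 0 ≤ B ^ 2 - 4 * A * C := by
    nlinarith [mul_nonneg (neg_nonneg.2 hA.le) hC]
  set d := Real.sqrt (B ^ 2 - 4 * A * C) with hddef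
  have hd0 : 0 ≤ d := Real.sqrt_nonneg _
  have hd2 : d ^ 2 = B ^ 2 - 4 * A * C := Real.sq_sqrt hdisc
  have h2A : 0 < -(2 * A) := by linarith
  have hBled : B ≤ d := by
    have h1 : Real.sqrt (B ^ 2) ≤ d :=
      Real.sqrt_le_sqrt (by nlinarith [mul_nonneg (neg_nonneg.2 hA.le) hC])
    calc B ≤ |B| := le_abs_self B
      _ = Real.sqrt (B ^ 2) := (Real.sqrt_sq_eq_abs B).symm
      _ ≤ d := h1
  set s := (B + d) / (-(2 * A)) with hsdef
  have hs : 0 < s := div_pos hBd h2A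
  have hs1 : (B - d) / (-(2 * A)) ≤ 0 :=
    div_nonpos_of_nonpos_of_nonneg (by linarith) h2A.le
  have hu3pos : ∀ x ∈ Ioo (0:ℝ) s, 0 < u3 x := by
    intro x hx
    rw [hu3eq x]
    exact mul_pos (he x) (quad_pos_mid A B C d hA hd2 (lt_of_le_of_lt hs1 hx.1) hx.2)
  have hu3neg : ∀ x ∈ Ioi s, u3 x < 0 := by
    intro x hx
    rw [hu3eq x]
    exact mul_neg_of_pos_of_neg (he x) (quad_neg_right A B C d hA hd0 hd2 hx)
  have hm2 : StrictMonoOn u2 (Icc 0 s) :=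
    smOn hD2 (convex_Icc 0 s) (by rw [interior_Icc]; exact hu3pos)
  have ha2 : StrictAntiOn u2 (Ici s) :=
    saOn hD2 (convex_Ici s) (by rw [interior_Ici]; exact hu3neg)
  have h2pos : ∀ x ∈ Ioi (0:ℝ), 0 < u2 x := by
    intro x hx
    have hx' : 0 < x := hx
    rcases le_or_gt x s with h | h
    · have := hm2 ⟨le_rfl, hs.le⟩ ⟨hx'.le, h⟩ hx'
      rwa [h20] at this
    · have := anti_gt_limit ha2 hlim2 x h.le
      linarith
  have hm1 : StrictMonoOn u1 (Ici 0) :=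
    smOn hD1 (convex_Ici 0) (by rw [interior_Ici]; exact h2pos)
  have h1pos : ∀ x ∈ Ioi (0:ℝ), 0 < u1 x := by
    intro x hx
    have hx' : 0 < x := hx
    have := hm1 (mem_Ici.2 le_rfl) (mem_Ici.2 hx'.le) hx'
    rwa [h10] at this
  have hm0 : StrictMonoOn u (Ici 0) :=
    smOn hD0 (convex_Ici 0) (by rw [interior_Ici]; exact h1pos)
  intro x hx
  have := hm0 (mem_Ici.2 le_rfl) (mem_Ici.2 hx.le) hx
  rwa [h00] at this
lemma masterONE_abs {u u1 u2 u3 e : ℝ → ℝ} (A B C L : ℝ)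
    (hA : A < 0) (hC : C < 0) (hL : 0 < L)
    (hD0 : ∀ x, HasDerivAt u (u1 x) x)
    (hD1 : ∀ x, HasDerivAt u1 (u2 x) x)
    (hD2 : ∀ x, HasDerivAt u2 (u3 x) x)
    (he : ∀ x, 0 < e x)
    (hu3eq : ∀ x, u3 x = e x * (A * x ^ 2 + B * x + C))
    (h00 : u 0 = 0) (h10 : u1 0 = 0) (h20 : u2 0 = 0)
    (hlim2 : Tendsto u2 atTop (𝓝 L))
    (hlim1 : Tendsto u1 atTop atTop)
    (hlim0 : Tendsto u atTop atTop) :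
    ∃! x, 0 < x ∧ u x = 0 := by
  -- the quadratic cannot be everywhere nonpositive on (0,∞)
  have hkey : ¬ (∀ x : ℝ, 0 < x → A * x ^ 2 + B * x + C ≤ 0) := by
    intro hall
    have hanti : AntitoneOn u2 (Ici 0) := by
      apply antitoneOn_of_deriv_nonpos (convex_Ici 0)
        (fun x _ => (hD2 x).continuousAt.continuousWithinAt)
        (fun x _ => (hD2 x).differentiableAt.differentiableWithinAt)
      intro x hx
      rw [interior_Ici] at hx
      rw [(hD2 x).deriv, hu3eq x]
      have := hall x hx
      nlinarith [he x]
    obtain ⟨x, hx1, hx2⟩ :=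
      ((hlim2.eventually (eventually_gt_nhds (show L / 2 < L by linarith))).and
        (eventually_gt_atTop 0)).exists
    have := hanti (mem_Ici.2 le_rfl) (mem_Ici.2 hx2.le) hx2.le
    rw [h20] at this
    linarith
  have hB : 0 < B := by
    by_contra hB
    push_neg at hB
    refine hkey fun x hx => ?_
    nlinarith [mul_nonneg (neg_nonneg.2 hA.le) (sq_nonneg x),
      mul_nonneg (neg_nonneg.2 hB) hx.le]
  have hdisc : 0 < B ^ 2 - 4 * A * C := by
    by_contra hd
    push_neg at hd
    refine hkey fun x hx => ?_
    nlinarith [sq_nonneg (2 * A * x + B)]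
  set d := Real.sqrt (B ^ 2 - 4 * A * C) with hddef
  have hd0 : 0 ≤ d := Real.sqrt_nonneg _
  have hd2 : d ^ 2 = B ^ 2 - 4 * A * C := Real.sq_sqrt hdisc.le
  have hdpos : 0 < d := Real.sqrt_pos.2 hdisc
  have h2A : 0 < -(2 * A) := by linarith
  have hdltB : d < B := by
    nlinarith [mul_pos (neg_pos.2 hA) (neg_pos.2 hC), hd2, hd0, hB]
  set s := (B - d) / (-(2 * A)) with hsdef
  set t := (B + d) / (-(2 * A)) with htdef
  have hs : 0 < s := div_pos (by linarith) h2A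
  have hst : s < t := by
    rw [hsdef, htdef, div_lt_div_iff₀ h2A h2A]
    nlinarith [mul_pos hdpos h2A]
  -- u3 signs
  have hu3neg1 : ∀ x ∈ Ioo (0:ℝ) s, u3 x < 0 := by
    intro x hx
    rw [hu3eq x]
    exact mul_neg_of_pos_of_neg (he x) (quad_neg_left A B C d hA hd0 hd2 hx.2)
  have hu3pos : ∀ x ∈ Ioo s t, 0 < u3 x := by
    intro x hx
    rw [hu3eq x]
    exact mul_pos (he x) (quad_pos_mid A B C d hA hd2 hx.1 hx.2)
  have hu3neg2 : ∀ x ∈ Ioi t, u3 x < 0 := by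
    intro x hx
    rw [hu3eq x]
    exact mul_neg_of_pos_of_neg (he x) (quad_neg_right A B C d hA hd0 hd2 hx)
  -- u2 analysis
  have ha2a : StrictAntiOn u2 (Icc 0 s) :=
    saOn hD2 (convex_Icc 0 s) (by rw [interior_Icc]; exact hu3neg1)
  have hm2 : StrictMonoOn u2 (Icc s t) :=
    smOn hD2 (convex_Icc s t) (by rw [interior_Icc]; exact hu3pos)
  have ha2b : StrictAntiOn u2 (Ici t) :=
    saOn hD2 (convex_Ici t) (by rw [interior_Ici]; exact hu3neg2)
  have h2t : ∀ x, t ≤ x → L < u2 x := anti_gt_limit ha2b hlim2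
  have h2s : u2 s < 0 := by
    have := ha2a ⟨le_rfl, hs.le⟩ ⟨hs.le, le_rfl⟩ hs
    rwa [h20] at this
  have hcont2 : ContinuousOn u2 (Icc s t) :=
    fun x _ => (hD2 x).continuousAt.continuousWithinAt
  obtain ⟨m, hm_mem, hm0⟩ := intermediate_value_Ioo hst.le hcont2
    (show (0:ℝ) ∈ Ioo (u2 s) (u2 t) from ⟨h2s, by linarith [h2t t le_rfl]⟩)
  have hmpos : 0 < m := lt_trans hs hm_mem.1
  have h2neg : ∀ x, 0 < x → x < m → u2 x < 0 := by
    intro x hx hxm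
    rcases le_or_gt x s with h | h
    · have := ha2a ⟨le_rfl, hs.le⟩ ⟨hx.le, h⟩ hx
      rwa [h20] at this
    · have := hm2 ⟨h.le, (lt_trans hxm hm_mem.2).le⟩ ⟨hm_mem.1.le, hm_mem.2.le⟩ hxm
      rwa [hm0] at this
  have h2pos : ∀ x, m < x → 0 < u2 x := by
    intro x hxm
    rcases le_or_gt x t with h | h
    · have := hm2 ⟨hm_mem.1.le, hm_mem.2.le⟩ ⟨(lt_trans hm_mem.1 hxm).le.trans (le_refl x) |>.trans (le_refl x) , h⟩ hxm
      rwa [hm0] at this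
    · linarith [h2t x h.le]
  -- u1 analysis
  have ha1 : StrictAntiOn u1 (Icc 0 m) :=
    saOn hD1 (convex_Icc 0 m)
      (by rw [interior_Icc]; exact fun x hx => h2neg x hx.1 hx.2)
  have hm1 : StrictMonoOn u1 (Ici m) :=
    smOn hD1 (convex_Ici m) (by rw [interior_Ici]; exact fun x hx => h2pos x hx)
  have h1m : u1 m < 0 := by
    have := ha1 ⟨le_rfl, hmpos.le⟩ ⟨hmpos.le, le_rfl⟩ hmpos
    rwa [h10] at this
  obtain ⟨X, hX1, hX2⟩ := ((hlim1.eventually_ge_atTop 1).and (eventually_gt_atTop m)).exists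
  obtain ⟨p, hp_mem, hp0⟩ := intermediate_value_Ioo hX2.le
    (fun x _ => (hD1 x).continuousAt.continuousWithinAt)
    (show (0:ℝ) ∈ Ioo (u1 m) (u1 X) from ⟨h1m, by linarith⟩)
  have hppos : 0 < p := lt_trans hmpos hp_mem.1
  have h1neg : ∀ x, 0 < x → x < p → u1 x < 0 := by
    intro x hx hxp
    rcases le_or_gt x m with h | h
    · have := ha1 ⟨le_rfl, hmpos.le⟩ ⟨hx.le, h⟩ hx
      rwa [h10] at this
    · have := hm1 (mem_Ici.2 h.le) (mem_Ici.2 hp_mem.1.le) hxp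
      rwa [hp0] at this
  have h1pos : ∀ x, p < x → 0 < u1 x := by
    intro x hx
    have := hm1 (mem_Ici.2 hp_mem.1.le) (mem_Ici.2 (hp_mem.1.le.trans hx.le)) hx
    rwa [hp0] at this
  -- u analysis
  have ha0 : StrictAntiOn u (Icc 0 p) :=
    saOn hD0 (convex_Icc 0 p)
      (by rw [interior_Icc]; exact fun x hx => h1neg x hx.1 hx.2)
  have hm0' : StrictMonoOn u (Ici p) :=
    smOn hD0 (convex_Ici p) (by rw [interior_Ici]; exact fun x hx => h1pos x hx)
  have hup : u p < 0 := by
    have := ha0 ⟨le_rfl, hppos.le⟩ ⟨hppos.le, le_rfl⟩ hppos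
    rwa [h00] at this
  obtain ⟨Y, hY1, hY2⟩ := ((hlim0.eventually_ge_atTop 1).and (eventually_gt_atTop p)).exists
  obtain ⟨z, hz_mem, hz0'⟩ := intermediate_value_Ioo hY2.le
    (fun x _ => (hD0 x).continuousAt.continuousWithinAt)
    (show (0:ℝ) ∈ Ioo (u p) (u Y) from ⟨hup, by linarith⟩)
  have hzpos : 0 < z := lt_trans hppos hz_mem.1
  have huneg : ∀ x, 0 < x → x < z → u x < 0 := by
    intro x hx hxz
    rcases le_or_gt x p with h | h
    · have := ha0 ⟨le_rfl, hppos.le⟩ ⟨hx.le, h⟩ hx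
      rwa [h00] at this
    · have := hm0' (mem_Ici.2 h.le) (mem_Ici.2 hz_mem.1.le) hxz
      rwa [hz0'] at this
  have hupos : ∀ x, z < x → 0 < u x := by
    intro x hx
    have := hm0' (mem_Ici.2 hz_mem.1.le) (mem_Ici.2 (hz_mem.1.le.trans hx.le)) hx
    rwa [hz0'] at this
  refine ⟨z, ⟨hzpos, hz0'⟩, ?_⟩
  rintro y ⟨hy1, hy2⟩
  rcases lt_trichotomy y z with h | h | h
  · exact absurd hy2 (ne_of_lt (huneg y hy1 h))
  · exact h
  · exact absurd hy2 (ne_of_gt (hupos y h))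
lemma masterPOS_sh (a α β γ δ ε ζ : ℝ) (ha : 0 < a) (hα : 0 < α) (hδ : 0 < δ)
    (hz0 : γ + ζ = 0) (hz1 : β + (ε - a * ζ) = 0)
    (hz2 : 2 * α + (2 * δ - 2 * (a * ε) + a ^ 2 * ζ) = 0)
    (hC : 0 ≤ -(a * (6 * δ - 3 * (a * ε) + a ^ 2 * ζ)))
    (hBd : 0 < a ^ 2 * (6 * δ - a * ε) +
      Real.sqrt ((a ^ 2 * (6 * δ - a * ε)) ^ 2 -
        4 * (-(a ^ 3 * δ)) * (-(a * (6 * δ - 3 * (a * ε) + a ^ 2 * ζ))))) :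
    ∀ x, 0 < x → 0 < sh a α β γ δ ε ζ x := by
  have hA : -(a ^ 3 * δ) < 0 := by nlinarith [mul_pos (mul_pos (mul_pos ha ha) ha) hδ]
  refine masterPOS_abs (u3 := _) (e := fun x => Real.exp (-(a * x)))
    (-(a ^ 3 * δ)) (a ^ 2 * (6 * δ - a * ε)) (-(a * (6 * δ - 3 * (a * ε) + a ^ 2 * ζ)))
    (2 * α) hA hC (by linarith) hBd
    (fun x => sh_deriv a α β γ δ ε ζ x)
    (fun x => sh_deriv a 0 (2 * α) β (-(a * δ)) (2 * δ - a * ε) (ε - a * ζ) x)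
    (fun x => sh_deriv a 0 (2 * 0) (2 * α) (-(a * -(a * δ)))
      (2 * -(a * δ) - a * (2 * δ - a * ε)) (2 * δ - a * ε - a * (ε - a * ζ)) x)
    (fun x => Real.exp_pos _)
    (fun x => by simp only [sh]; ring)
    (by simp [sh]; linarith)
    (by simp [sh]; linear_combination hz1)
    (by simp [sh]; linear_combination hz2)
    (sh_tendsto_const a (2 * 0) (2 * α) _ _ _ ha (by norm_num))

lemma masterONE_sh (a α β γ δ ε ζ : ℝ) (ha : 0 < a) (hα : 0 < α) (hδ : 0 < δ)
    (hz0 : γ + ζ = 0) (hz1 : β + (ε - a * ζ) = 0)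
    (hz2 : 2 * α + (2 * δ - 2 * (a * ε) + a ^ 2 * ζ) = 0)
    (hC : -(a * (6 * δ - 3 * (a * ε) + a ^ 2 * ζ)) < 0) :
    ∃! x, 0 < x ∧ sh a α β γ δ ε ζ x = 0 := by
  have hA : -(a ^ 3 * δ) < 0 := by nlinarith [mul_pos (mul_pos (mul_pos ha ha) ha) hδ]
  refine masterONE_abs (u3 := _) (e := fun x => Real.exp (-(a * x)))
    (-(a ^ 3 * δ)) (a ^ 2 * (6 * δ - a * ε)) (-(a * (6 * δ - 3 * (a * ε) + a ^ 2 * ζ)))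
    (2 * α) hA hC (by linarith)
    (fun x => sh_deriv a α β γ δ ε ζ x)
    (fun x => sh_deriv a 0 (2 * α) β (-(a * δ)) (2 * δ - a * ε) (ε - a * ζ) x)
    (fun x => sh_deriv a 0 (2 * 0) (2 * α) (-(a * -(a * δ)))
      (2 * -(a * δ) - a * (2 * δ - a * ε)) (2 * δ - a * ε - a * (ε - a * ζ)) x)
    (fun x => Real.exp_pos _)
    (fun x => by simp only [sh]; ring)
    (by simp [sh]; linarith)
    (by simp [sh]; linear_combination hz1)
    (by simp [sh]; linear_combination hz2)
    (sh_tendsto_const a (2 * 0) (2 * α) _ _ _ ha (by norm_num))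
    (sh_tendsto_atTop_lin a (2 * α) β _ _ _ ha (by linarith))
    (sh_tendsto_atTop_quad a α β γ δ ε ζ ha hα)
/-- The closing-condition function for U(2)-invariant gradient Kähler Ricci
solitons with orbifold singularities on the compact spaces `M_n`. -/
noncomputable def h1 (k1 k2 : ℝ) : ℝ → ℝ := fun x =>
  Real.exp ((k1 + k2) * x) * (k2 * (2 + k2) * x ^ 2 - 2 * (1 + k2) * x + 2)
    + k1 * (2 - k1) * x ^ 2 + 2 * (1 - k1) * x - 2

theorem h1_roots (k1 k2 : ℝ) (hk1 : 0 < k1) (hk1' : k1 < 2) (hk2 : 0 < k2) :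
    ((k1 + k2) * (6 * k2 * (2 + k2) - 6 * (k1 + k2) * (1 + k2) + 2 * (k1 + k2) ^ 2) > 0 →
      (∃! x : ℝ, x < 0 ∧ h1 k1 k2 x = 0) ∧ ∀ x : ℝ, 0 < x → h1 k1 k2 x ≠ 0) ∧
    ((k1 + k2) * (6 * k2 * (2 + k2) - 6 * (k1 + k2) * (1 + k2) + 2 * (k1 + k2) ^ 2) < 0 →
      (∃! x : ℝ, 0 < x ∧ h1 k1 k2 x = 0) ∧ ∀ x : ℝ, x < 0 → h1 k1 k2 x ≠ 0) ∧
    ((k1 + k2) * (6 * k2 * (2 + k2) - 6 * (k1 + k2) * (1 + k2) + 2 * (k1 + k2) ^ 2) = 0 →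
      ∀ x : ℝ, x ≠ 0 → h1 k1 k2 x ≠ 0) := by
  have ha : 0 < k1 + k2 := by linarith
  have hc1 : 0 < k1 * (2 - k1) := mul_pos hk1 (by linarith)
  have hc2 : 0 < k2 * (2 + k2) := mul_pos hk2 (by linarith)
  -- transfer identities
  have hG : ∀ x : ℝ,
      sh (k1 + k2) (k2 * (2 + k2)) (-(2 * (1 + k2))) 2 (k1 * (2 - k1)) (2 * (1 - k1)) (-2) x
        = Real.exp (-((k1 + k2) * x)) * h1 k1 k2 x := by
    intro x
    have he : Real.exp (-((k1 + k2) * x)) * Real.exp ((k1 + k2) * x) = 1 := by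
      rw [← Real.exp_add]; simp
    simp only [sh, h1]
    linear_combination (-(k2 * (2 + k2) * x ^ 2 - 2 * (1 + k2) * x + 2)) * he
  have hF : ∀ x : ℝ,
      sh (k1 + k2) (k1 * (2 - k1)) (-(2 * (1 - k1))) (-2) (k2 * (2 + k2)) (2 * (1 + k2)) 2 x
        = h1 k1 k2 (-x) := by
    intro x
    simp only [sh, h1]
    rw [show (k1 + k2) * -x = -((k1 + k2) * x) by ring]
    ring
  have hAG : -((k1 + k2) ^ 3 * (k1 * (2 - k1))) < 0 := by
    nlinarith [mul_pos (mul_pos (mul_pos ha ha) ha) hc1]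
  have hAF : -((k1 + k2) ^ 3 * (k2 * (2 + k2))) < 0 := by
    nlinarith [mul_pos (mul_pos (mul_pos ha ha) ha) hc2]
  -- no-root transfers
  have noPos : (∀ x, 0 < x →
      0 < sh (k1 + k2) (k2 * (2 + k2)) (-(2 * (1 + k2))) 2 (k1 * (2 - k1)) (2 * (1 - k1)) (-2) x)
      → ∀ x : ℝ, 0 < x → h1 k1 k2 x ≠ 0 := by
    intro hpos x hx hne
    have h := hpos x hx
    rw [hG x, hne, mul_zero] at h
    exact lt_irrefl 0 h
  have noNeg : (∀ x, 0 < x →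
      0 < sh (k1 + k2) (k1 * (2 - k1)) (-(2 * (1 - k1))) (-2) (k2 * (2 + k2)) (2 * (1 + k2)) 2 x)
      → ∀ x : ℝ, x < 0 → h1 k1 k2 x ≠ 0 := by
    intro hpos x hx hne
    have h := hpos (-x) (by linarith)
    rw [hF (-x), neg_neg, hne] at h
    exact lt_irrefl 0 h
  refine ⟨fun hT => ?_, fun hT => ?_, fun hT => ?_⟩
  · -- T > 0 : one negative root, no positive roots
    constructor
    · obtain ⟨z, ⟨hz1, hz2⟩, hz3⟩ :=
        masterONE_sh (k1 + k2) (k1 * (2 - k1)) (-(2 * (1 - k1))) (-2)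
          (k2 * (2 + k2)) (2 * (1 + k2)) 2 ha hc1 hc2
          (by norm_num) (by ring) (by ring) (by nlinarith [hT])
      refine ⟨-z, ⟨by linarith, by rw [← hF z]; exact hz2⟩, ?_⟩
      rintro y ⟨hy1, hy2⟩
      have hyz : -y = z := hz3 (-y) ⟨by linarith, by rw [hF (-y), neg_neg]; exact hy2⟩
      linarith
    · exact noPos (masterPOS_sh _ _ _ _ _ _ _ ha hc2 hc1
        (by norm_num) (by ring) (by ring) (by nlinarith [hT])
        (Bd_pos _ _ _ hAG (by nlinarith [hT])))
  · -- T < 0 : one positive root, no negative roots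
    constructor
    · obtain ⟨z, ⟨hz1, hz2⟩, hz3⟩ :=
        masterONE_sh (k1 + k2) (k2 * (2 + k2)) (-(2 * (1 + k2))) 2
          (k1 * (2 - k1)) (2 * (1 - k1)) (-2) ha hc2 hc1
          (by norm_num) (by ring) (by ring) (by nlinarith [hT])
      refine ⟨z, ⟨hz1, ?_⟩, ?_⟩
      · have h : Real.exp (-((k1 + k2) * z)) * h1 k1 k2 z = 0 := by
          rw [← hG z]; exact hz2
        exact (mul_eq_zero.1 h).resolve_left (Real.exp_ne_zero _)
      · rintro y ⟨hy1, hy2⟩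
        exact hz3 y ⟨hy1, by rw [hG y, hy2, mul_zero]⟩
    · exact noNeg (masterPOS_sh _ _ _ _ _ _ _ ha hc1 hc2
        (by norm_num) (by ring) (by ring) (by nlinarith [hT])
        (Bd_pos _ _ _ hAF (by nlinarith [hT])))
  · -- T = 0 : no nonzero roots
    have hinner : 6 * k2 * (2 + k2) - 6 * (k1 + k2) * (1 + k2) + 2 * (k1 + k2) ^ 2 = 0 := by
      rcases mul_eq_zero.1 hT with h | h
      · linarith
      · exact h
    have hBG : 0 < (k1 + k2) ^ 2 * (6 * (k1 * (2 - k1)) - (k1 + k2) * (2 * (1 - k1))) := by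
      nlinarith [hinner, mul_pos ha ha,
        mul_pos (mul_pos (mul_pos ha ha) ha) (show (0:ℝ) < 2 - k1 + k2 by linarith)]
    have hBF : 0 < (k1 + k2) ^ 2 * (6 * (k2 * (2 + k2)) - (k1 + k2) * (2 * (1 + k2))) := by
      nlinarith [hinner, mul_pos ha ha,
        mul_pos (mul_pos (mul_pos ha ha) ha) (show (0:ℝ) < 2 - k1 + k2 by linarith)]
    intro x hx
    rcases hx.lt_or_gt with h | h
    · exact noNeg (masterPOS_sh _ _ _ _ _ _ _ ha hc1 hc2
        (by norm_num) (by ring) (by ring) (by nlinarith [hT])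
        (Bd_pos' _ _ _ hBF (by linear_combination -hT))) x h
    · exact noPos (masterPOS_sh _ _ _ _ _ _ _ ha hc2 hc1
        (by norm_num) (by ring) (by ring) (by nlinarith [hT])
        (Bd_pos' _ _ _ hBG (by linear_combination hT))) x h
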